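/- With notation as in the regularized integral paper: Res_{z=0}(P̂² Ẑ dz) = π⁴(E₄ − Ê₂²)/9, where P̂(z) = ℘(z) + (π²/3)E₂ − π/Im τ, Ẑ(z) = ζ(z) − (π²/3)E₂ z − (π/Im τ)(z̄−z), Ê₂ = E₂ − 3/(π Im τ), and E₄ is the normalized Eisenstein series of weight 4. -/

import Mathlib

open Metric Filter Topology Complex

/-- The lattice point `m + nτ`. -/
noncomputable def lpt (τ : ℂ) (p : ℤ × ℤ) : ℂ := (p.1 : ℂ) + (p.2 : ℂ) * τ

/-- The Eisenstein series `G_k(τ) = Σ_{λ ∈ Λ_τ \ {0}} λ^{-k}`. -/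
noncomputable def Gk (τ : ℂ) (k : ℕ) : ℂ :=
  ∑' p : {p : ℤ × ℤ // p ≠ 0}, 1 / (lpt τ p.1) ^ k

/-- The Weierstrass zeta function of `Λ_τ`. -/
noncomputable def wzeta (τ : ℂ) (z : ℂ) : ℂ :=
  1 / z + ∑' p : {p : ℤ × ℤ // p ≠ 0},
    (1 / (z + lpt τ p.1) - 1 / lpt τ p.1 + z / (lpt τ p.1) ^ 2)

/-- The Weierstrass ℘-function of `Λ_τ`. -/
noncomputable def wp (τ : ℂ) (z : ℂ) : ℂ :=
  1 / z ^ 2 + ∑' p : {p : ℤ × ℤ // p ≠ 0},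
    (1 / (z + lpt τ p.1) ^ 2 - 1 / (lpt τ p.1) ^ 2)

/-- `Ẑ(z,z̄) = ζ(z;τ) - (π²/3)E₂ z - (π/Im τ)(z̄ - z)`. -/
noncomputable def Zhat (τ E₂ : ℂ) (z : ℂ) : ℂ :=
  wzeta τ z - ((Real.pi : ℂ) ^ 2 / 3) * E₂ * z -
    ((Real.pi / τ.im : ℝ) : ℂ) * (starRingEnd ℂ z - z)

/-- `P̂(z) = ℘(z;τ) + (π²/3)E₂ - π/Im τ`. -/
noncomputable def Phat (τ E₂ : ℂ) (z : ℂ) : ℂ :=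
  wp τ z + ((Real.pi : ℂ) ^ 2 / 3) * E₂ - ((Real.pi / τ.im : ℝ) : ℂ)

/-- `Ê₂ = E₂ - 3/(π Im τ)`. -/
noncomputable def Ehat2 (τ E₂ : ℂ) : ℂ := E₂ - ((3 / (Real.pi * τ.im) : ℝ) : ℂ)

/-- `IsRes f c R` means: the residue of `f dz` at `c`, defined as
`(1/2πi) lim_{ε→0} ∮_{|z-c|=ε} f(z) dz`, exists and equals `R`. -/
def IsRes (f : ℂ → ℂ) (c R : ℂ) : Prop :=
  Tendsto (fun ε : ℝ => (2 * (Real.pi : ℂ) * Complex.I)⁻¹ * ∮ z in C(c, ε), f z)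
    (𝓝[>] (0 : ℝ)) (𝓝 R)

open MeasureTheory

namespace Complex

noncomputable def abs : AbsoluteValue ℂ ℝ where
  toFun z := ‖z‖
  map_mul' := norm_mul
  nonneg' := norm_nonneg
  eq_zero' _ := norm_eq_zero
  add_le' := norm_add_le

lemma norm_eq_abs (z : ℂ) : ‖z‖ = Complex.abs z := rfl

lemma abs_ofReal (r : ℝ) : Complex.abs (r : ℂ) = |r| := Complex.norm_real r

lemma abs_I : Complex.abs I = 1 := Complex.norm_I

lemma abs_two : Complex.abs 2 = 2 := Complex.norm_two

lemma abs_re_le_abs (z : ℂ) : |z.re| ≤ Complex.abs z := Complex.abs_re_le_norm z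

lemma normSq_eq_abs (z : ℂ) : normSq z = Complex.abs z ^ 2 := Complex.normSq_eq_norm_sq z

end Complex

lemma abs_circleMap_zero (R θ : ℝ) : Complex.abs (circleMap 0 R θ) = |R| := norm_circleMap_zero R θ

namespace ResWork
variable {τ : ℂ}

noncomputable def rr (τ : ℂ) (hτ : 0 < τ.im) : ℝ := EisensteinSeries.r ⟨τ, hτ⟩

lemma rr_pos (hτ : 0 < τ.im) : 0 < rr τ hτ := EisensteinSeries.r_pos _

lemma vec_ne (p : {p : ℤ × ℤ // p ≠ 0}) : ![(p.1.2 : ℤ), p.1.1] ≠ 0 := by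
  intro h
  apply p.2
  have h1 := congrFun h 0
  have h2 := congrFun h 1
  simp at h1 h2
  exact Prod.ext h2 h1

lemma one_le_vec_norm (p : {p : ℤ × ℤ // p ≠ 0}) : (1:ℝ) ≤ ‖![(p.1.2 : ℤ), p.1.1]‖ := by
  rw [EisensteinSeries.norm_eq_max_natAbs]
  have h : p.1.2.natAbs ≠ 0 ∨ p.1.1.natAbs ≠ 0 := by
    by_contra h
    push_neg at h
    exact p.2 (Prod.ext (Int.natAbs_eq_zero.mp h.2) (Int.natAbs_eq_zero.mp h.1))
  have : (1 : ℕ) ≤ max (![(p.1.2 : ℤ), p.1.1] 0).natAbs (![(p.1.2 : ℤ), p.1.1] 1).natAbs := by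
    simp only [Matrix.cons_val_zero, Matrix.cons_val_one, Matrix.head_cons]
    rcases h with h | h
    · exact le_max_of_le_left (Nat.one_le_iff_ne_zero.mpr h)
    · exact le_max_of_le_right (Nat.one_le_iff_ne_zero.mpr h)
  exact_mod_cast this

lemma rr_le (hτ : 0 < τ.im) (p : {p : ℤ × ℤ // p ≠ 0}) :
    rr τ hτ ≤ Complex.abs (lpt τ p.1) := by
  have h := EisensteinSeries.r_mul_max_le (⟨τ, hτ⟩ : UpperHalfPlane) (vec_ne p)
  calc rr τ hτ = rr τ hτ * 1 := by ring
  _ ≤ rr τ hτ * ‖![(p.1.2 : ℤ), p.1.1]‖ :=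
      mul_le_mul_of_nonneg_left (one_le_vec_norm p) (rr_pos hτ).le
  _ ≤ Complex.abs (((![(p.1.2 : ℤ), p.1.1] : Fin 2 → ℤ) 0 : ℂ) * ((⟨τ, hτ⟩ : UpperHalfPlane) : ℂ)
      + ((![(p.1.2 : ℤ), p.1.1] : Fin 2 → ℤ) 1 : ℂ)) := h
  _ = Complex.abs (lpt τ p.1) := by
      simp only [Matrix.cons_val_zero, Matrix.cons_val_one, Matrix.head_cons]
      congr 1
      simp [lpt, UpperHalfPlane.coe]
      ring

lemma lpt_ne_zero (hτ : 0 < τ.im) (p : {p : ℤ × ℤ // p ≠ 0}) : lpt τ p.1 ≠ 0 := by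
  intro h
  have := rr_le hτ p
  rw [h] at this
  simp at this
  exact absurd (this.trans_lt' (rr_pos hτ)) (lt_irrefl _)

lemma summable_cube (hτ : 0 < τ.im) :
    Summable fun p : {p : ℤ × ℤ // p ≠ 0} => 1 / Complex.abs (lpt τ p.1) ^ 3 := by
  have h := EisensteinSeries.summable_one_div_norm_rpow (k := 3) (by norm_num)
  have hinj : Function.Injective
      (fun p : {p : ℤ × ℤ // p ≠ 0} => (![(p.1.2 : ℤ), p.1.1] : Fin 2 → ℤ)) := by
    intro p q hpq
    have h1 := congrFun hpq 0
    have h2 := congrFun hpq 1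
    simp at h1 h2
    exact Subtype.ext (Prod.ext h2 h1)
  have h2 : Summable fun p : {p : ℤ × ℤ // p ≠ 0} => ‖![(p.1.2 : ℤ), p.1.1]‖ ^ (-3 : ℝ) :=
    h.comp_injective hinj
  apply Summable.of_nonneg_of_le (fun p => by positivity) _ (h2.mul_left ((rr τ hτ)⁻¹ ^ 3))
  intro p
  have h1 : (1:ℝ) ≤ ‖![(p.1.2 : ℤ), p.1.1]‖ := one_le_vec_norm p
  have hr := rr_pos hτ
  have hle := rr_le hτ p
  have hrn : rr τ hτ * ‖![(p.1.2 : ℤ), p.1.1]‖ ≤ Complex.abs (lpt τ p.1) := by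
    calc rr τ hτ * ‖![(p.1.2 : ℤ), p.1.1]‖
        ≤ _ := mul_le_mul_of_nonneg_left (le_refl _) hr.le
    _ ≤ _ := by
        have h := EisensteinSeries.r_mul_max_le (⟨τ, hτ⟩ : UpperHalfPlane) (vec_ne p)
        calc rr τ hτ * ‖![(p.1.2 : ℤ), p.1.1]‖ ≤ _ := h
        _ = Complex.abs (lpt τ p.1) := by
            simp only [Matrix.cons_val_zero, Matrix.cons_val_one, Matrix.head_cons]
            congr 1
            simp [lpt, UpperHalfPlane.coe]
            ring
  have hnorm_pos : (0:ℝ) < ‖![(p.1.2 : ℤ), p.1.1]‖ := lt_of_lt_of_le one_pos h1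
  have hA : (0:ℝ) < Complex.abs (lpt τ p.1) := lt_of_lt_of_le hr hle
  have hcube : (rr τ hτ * ‖![(p.1.2 : ℤ), p.1.1]‖) ^ 3 ≤ Complex.abs (lpt τ p.1) ^ 3 :=
    pow_le_pow_left₀ (by positivity) hrn 3
  have he : ‖![(p.1.2 : ℤ), p.1.1]‖ ^ (-3 : ℝ) = (‖![(p.1.2 : ℤ), p.1.1]‖ ^ (3:ℕ))⁻¹ := by
    rw [Real.rpow_neg hnorm_pos.le]
    norm_num
  rw [he]
  rw [one_div]
  have heq : (rr τ hτ)⁻¹ ^ 3 * (‖![(p.1.2 : ℤ), p.1.1]‖ ^ (3:ℕ))⁻¹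
      = ((rr τ hτ * ‖![(p.1.2 : ℤ), p.1.1]‖) ^ 3)⁻¹ := by
    field_simp
  rw [heq]
  exact inv_anti₀ (by positivity) hcube


noncomputable def Wt (τ : ℂ) (p : {p : ℤ × ℤ // p ≠ 0}) (z : ℂ) : ℂ :=
  1 / (z + lpt τ p.1) ^ 2 - 1 / (lpt τ p.1) ^ 2

noncomputable def Zt (τ : ℂ) (p : {p : ℤ × ℤ // p ≠ 0}) (z : ℂ) : ℂ :=
  1 / (z + lpt τ p.1) - 1 / lpt τ p.1 + z / (lpt τ p.1) ^ 2

noncomputable def SW (τ : ℂ) (z : ℂ) : ℂ := ∑' p, Wt τ p z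
noncomputable def SZ (τ : ℂ) (z : ℂ) : ℂ := ∑' p, Zt τ p z
noncomputable def S3 (τ : ℂ) : ℝ := ∑' p : {p : ℤ × ℤ // p ≠ 0}, 1 / Complex.abs (lpt τ p.1) ^ 3

lemma S3_nonneg : 0 ≤ S3 τ := tsum_nonneg (fun p => by positivity)

lemma abs_of_sphere_p {ε : ℝ} {z : ℂ} (hz : z ∈ sphere (0:ℂ) ε) : Complex.abs z = ε := by
  simpa [Complex.norm_eq_abs] using mem_sphere_zero_iff_norm.mp hz

lemma ne_zero_of_sphere_p {ε : ℝ} (hε : 0 < ε) {z : ℂ} (hz : z ∈ sphere (0:ℂ) ε) : z ≠ 0 := by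
  intro h
  have h2 := abs_of_sphere_p hz
  rw [h] at h2
  simp at h2
  exact hε.ne h2

lemma abs_add_lpt (hτ : 0 < τ.im) {ε : ℝ} (hε2 : ε ≤ rr τ hτ / 2) {z : ℂ}
    (hz : z ∈ sphere (0:ℂ) ε) (p : {p : ℤ × ℤ // p ≠ 0}) :
    Complex.abs (lpt τ p.1) / 2 ≤ Complex.abs (z + lpt τ p.1) := by
  have h1 : Complex.abs (lpt τ p.1) ≤ Complex.abs (z + lpt τ p.1) + Complex.abs z := by
    calc Complex.abs (lpt τ p.1) = Complex.abs ((z + lpt τ p.1) + (-z)) := by congr 1; ring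
    _ ≤ _ := by simpa using Complex.abs.add_le (z + lpt τ p.1) (-z)
  have h2 : Complex.abs z ≤ Complex.abs (lpt τ p.1) / 2 := by
    rw [abs_of_sphere_p hz]
    calc ε ≤ rr τ hτ / 2 := hε2
    _ ≤ _ := by have := rr_le hτ p; linarith
  linarith

lemma add_lpt_ne (hτ : 0 < τ.im) {ε : ℝ} (hε2 : ε ≤ rr τ hτ / 2) {z : ℂ}
    (hz : z ∈ sphere (0:ℂ) ε) (p : {p : ℤ × ℤ // p ≠ 0}) : z + lpt τ p.1 ≠ 0 := by
  intro h
  have h1 := abs_add_lpt hτ hε2 hz p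
  rw [h] at h1
  simp at h1
  have h2 : 0 < Complex.abs (lpt τ p.1) := (rr_pos hτ).trans_le (rr_le hτ p)
  linarith

lemma Wt_bound (hτ : 0 < τ.im) {ε : ℝ} (hε : 0 < ε) (hε2 : ε ≤ rr τ hτ / 2) {z : ℂ}
    (hz : z ∈ sphere (0:ℂ) ε) (p : {p : ℤ × ℤ // p ≠ 0}) :
    Complex.abs (Wt τ p z) ≤ 10 * ε / Complex.abs (lpt τ p.1) ^ 3 := by
  set lam := lpt τ p.1 with hlam
  have hl0 : lam ≠ 0 := lpt_ne_zero hτ p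
  have hz0 : z + lam ≠ 0 := add_lpt_ne hτ hε2 hz p
  have hid : Wt τ p z = z * (-(2 * lam + z)) / (lam ^ 2 * (z + lam) ^ 2) := by
    rw [Wt, ← hlam]
    field_simp
    ring
  have hA : 0 < Complex.abs lam := (rr_pos hτ).trans_le (rr_le hτ p)
  have hZA : Complex.abs lam / 2 ≤ Complex.abs (z + lam) := abs_add_lpt hτ hε2 hz p
  have habsz : Complex.abs z = ε := abs_of_sphere_p hz
  have hεla : ε ≤ Complex.abs lam / 2 := hε2.trans (by have := rr_le hτ p; linarith)
  have hnum : Complex.abs (z * (-(2 * lam + z))) ≤ ε * (5 / 2 * Complex.abs lam) := by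
    rw [map_mul, habsz]
    apply mul_le_mul_of_nonneg_left _ hε.le
    rw [map_neg_eq_map]
    calc Complex.abs (2 * lam + z) ≤ Complex.abs (2 * lam) + Complex.abs z := Complex.abs.add_le _ _
    _ = 2 * Complex.abs lam + ε := by rw [habsz, map_mul]; norm_num [Complex.abs_two]
    _ ≤ 2 * Complex.abs lam + Complex.abs lam / 2 := by linarith
    _ = 5 / 2 * Complex.abs lam := by ring
  have hden : Complex.abs lam ^ 2 * (Complex.abs lam / 2) ^ 2
      ≤ Complex.abs (lam ^ 2 * (z + lam) ^ 2) := by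
    rw [map_mul, map_pow, map_pow]
    apply mul_le_mul_of_nonneg_left _ (by positivity)
    exact pow_le_pow_left₀ (by positivity) hZA 2
  calc Complex.abs (Wt τ p z) = Complex.abs (z * (-(2 * lam + z))) /
      Complex.abs (lam ^ 2 * (z + lam) ^ 2) := by rw [hid, map_div₀]
  _ ≤ (ε * (5 / 2 * Complex.abs lam)) / (Complex.abs lam ^ 2 * (Complex.abs lam / 2) ^ 2) :=
      div_le_div₀ (mul_nonneg hε.le (by positivity)) hnum (by positivity) hden
  _ = 10 * ε / Complex.abs lam ^ 3 := by field_simp; ring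

lemma Zt_bound (hτ : 0 < τ.im) {ε : ℝ} (hε : 0 < ε) (hε2 : ε ≤ rr τ hτ / 2) {z : ℂ}
    (hz : z ∈ sphere (0:ℂ) ε) (p : {p : ℤ × ℤ // p ≠ 0}) :
    Complex.abs (Zt τ p z) ≤ 2 * ε ^ 2 / Complex.abs (lpt τ p.1) ^ 3 := by
  set lam := lpt τ p.1 with hlam
  have hl0 : lam ≠ 0 := lpt_ne_zero hτ p
  have hz0 : z + lam ≠ 0 := add_lpt_ne hτ hε2 hz p
  have hid : Zt τ p z = z ^ 2 / (lam ^ 2 * (z + lam)) := by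
    rw [Zt, ← hlam]
    field_simp
    ring
  have hA : 0 < Complex.abs lam := (rr_pos hτ).trans_le (rr_le hτ p)
  have hZA : Complex.abs lam / 2 ≤ Complex.abs (z + lam) := abs_add_lpt hτ hε2 hz p
  have habsz : Complex.abs z = ε := abs_of_sphere_p hz
  have hden : Complex.abs lam ^ 2 * (Complex.abs lam / 2)
      ≤ Complex.abs (lam ^ 2 * (z + lam)) := by
    rw [map_mul, map_pow]
    exact mul_le_mul_of_nonneg_left hZA (by positivity)
  calc Complex.abs (Zt τ p z) = Complex.abs (z ^ 2) / Complex.abs (lam ^ 2 * (z + lam)) := (by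
      rw [hid, map_div₀])
  _ ≤ ε ^ 2 / (Complex.abs lam ^ 2 * (Complex.abs lam / 2)) :=
      div_le_div₀ (by positivity) (by rw [map_pow, habsz]) (by positivity) hden
  _ = 2 * ε ^ 2 / Complex.abs lam ^ 3 := by field_simp

lemma summable_Wt_bound (hτ : 0 < τ.im) (c : ℝ) :
    Summable fun p : {p : ℤ × ℤ // p ≠ 0} => c / Complex.abs (lpt τ p.1) ^ 3 := by
  have := (summable_cube hτ).mul_left c
  simpa [div_eq_mul_inv, mul_comm, mul_assoc, one_div] using this

lemma SW_bound (hτ : 0 < τ.im) {ε : ℝ} (hε : 0 < ε) (hε2 : ε ≤ rr τ hτ / 2) {z : ℂ}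
    (hz : z ∈ sphere (0:ℂ) ε) : Complex.abs (SW τ z) ≤ 10 * ε * S3 τ := by
  have hsum : Summable fun p => Complex.abs (Wt τ p z) :=
    Summable.of_nonneg_of_le (fun p => Complex.abs.nonneg _)
      (fun p => Wt_bound hτ hε hε2 hz p) (summable_Wt_bound hτ (10 * ε))
  calc Complex.abs (SW τ z) ≤ ∑' p, Complex.abs (Wt τ p z) := (by
      simpa [Complex.norm_eq_abs, SW] using
        norm_tsum_le_tsum_norm (f := fun p => Wt τ p z)
          (by simpa [Complex.norm_eq_abs] using hsum))
  _ ≤ ∑' p : {p : ℤ × ℤ // p ≠ 0}, 10 * ε / Complex.abs (lpt τ p.1) ^ 3 :=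
      Summable.tsum_le_tsum (fun p => Wt_bound hτ hε hε2 hz p) hsum (summable_Wt_bound hτ (10 * ε))
  _ = 10 * ε * S3 τ := by
      rw [S3, ← tsum_mul_left]
      congr 1
      funext p
      field_simp

lemma SZ_bound (hτ : 0 < τ.im) {ε : ℝ} (hε : 0 < ε) (hε2 : ε ≤ rr τ hτ / 2) {z : ℂ}
    (hz : z ∈ sphere (0:ℂ) ε) : Complex.abs (SZ τ z) ≤ 2 * ε ^ 2 * S3 τ := by
  have hsum : Summable fun p => Complex.abs (Zt τ p z) :=
    Summable.of_nonneg_of_le (fun p => Complex.abs.nonneg _)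
      (fun p => Zt_bound hτ hε hε2 hz p) (summable_Wt_bound hτ (2 * ε ^ 2))
  calc Complex.abs (SZ τ z) ≤ ∑' p, Complex.abs (Zt τ p z) := (by
      simpa [Complex.norm_eq_abs, SZ] using
        norm_tsum_le_tsum_norm (f := fun p => Zt τ p z)
          (by simpa [Complex.norm_eq_abs] using hsum))
  _ ≤ ∑' p : {p : ℤ × ℤ // p ≠ 0}, 2 * ε ^ 2 / Complex.abs (lpt τ p.1) ^ 3 :=
      Summable.tsum_le_tsum (fun p => Zt_bound hτ hε hε2 hz p) hsum (summable_Wt_bound hτ (2 * ε ^ 2))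
  _ = 2 * ε ^ 2 * S3 τ := by
      rw [S3, ← tsum_mul_left]
      congr 1
      funext p
      field_simp

lemma continuousOn_SW (hτ : 0 < τ.im) {ε : ℝ} (hε : 0 < ε) (hε2 : ε ≤ rr τ hτ / 2) :
    ContinuousOn (SW τ) (sphere (0:ℂ) ε) := by
  apply continuousOn_tsum
    (u := fun p : {p : ℤ × ℤ // p ≠ 0} => 10 * ε / Complex.abs (lpt τ p.1) ^ 3)
  · intro p
    apply ContinuousOn.sub _ continuousOn_const
    apply ContinuousOn.div continuousOn_const
    · exact ((continuousOn_id.add continuousOn_const).pow 2)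
    · intro x hx
      exact pow_ne_zero 2 (add_lpt_ne hτ hε2 hx p)
  · exact summable_Wt_bound hτ (10 * ε)
  · intro p x hx
    simpa [Complex.norm_eq_abs] using Wt_bound hτ hε hε2 hx p

lemma continuousOn_SZ (hτ : 0 < τ.im) {ε : ℝ} (hε : 0 < ε) (hε2 : ε ≤ rr τ hτ / 2) :
    ContinuousOn (SZ τ) (sphere (0:ℂ) ε) := by
  apply continuousOn_tsum
    (u := fun p : {p : ℤ × ℤ // p ≠ 0} => 2 * ε ^ 2 / Complex.abs (lpt τ p.1) ^ 3)
  · intro p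
    apply ContinuousOn.add
    · apply ContinuousOn.sub _ continuousOn_const
      apply ContinuousOn.div continuousOn_const
      · exact (continuousOn_id.add continuousOn_const)
      · intro x hx
        exact add_lpt_ne hτ hε2 hx p
    · exact continuousOn_id.div continuousOn_const (fun x _ => pow_ne_zero 2 (lpt_ne_zero hτ p))
  · exact summable_Wt_bound hτ (2 * ε ^ 2)
  · intro p x hx
    simpa [Complex.norm_eq_abs] using Zt_bound hτ hε hε2 hx p


lemma circleIntegral_add {f g : ℂ → ℂ} {c : ℂ} {R : ℝ} (hf : CircleIntegrable f c R)
    (hg : CircleIntegrable g c R) :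
    (∮ z in C(c, R), (f z + g z)) = (∮ z in C(c, R), f z) + ∮ z in C(c, R), g z := by
  simp only [circleIntegral, smul_add, intervalIntegral.integral_add hf.out hg.out]

lemma cInt_zpow {R : ℝ} (hR : 0 < R) {n : ℕ} (hn : n ≠ 1) :
    (∮ z in C((0:ℂ), R), 1 / z ^ n) = 0 := by
  rw [circleIntegral.integral_congr hR.le (g := fun z => (z - 0) ^ (-(n:ℤ)))]
  · exact circleIntegral.integral_sub_zpow_of_ne (by omega) _ _ _
  · intro z hz
    have hz0 : z ≠ 0 := ne_zero_of_sphere_p hR hz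
    simp [zpow_neg, zpow_natCast, one_div]

lemma cInt_inv {R : ℝ} (hR : 0 < R) :
    (∮ z in C((0:ℂ), R), 1 / z) = 2 * Real.pi * I := by
  rw [circleIntegral.integral_congr hR.le (g := fun z => (z - 0)⁻¹)]
  · exact circleIntegral.integral_sub_center_inv 0 hR.ne'
  · intro z hz
    simp [one_div]

lemma log_hasDeriv {lam z : ℂ} (hz : Complex.abs z < Complex.abs lam) :
    HasDerivAt (fun w => Complex.log (1 + w / lam)) (z + lam)⁻¹ z := by
  have hlam : lam ≠ 0 := by
    intro h; rw [h] at hz; simp at hz; exact absurd ((Complex.abs.nonneg z).trans_lt hz) (by simp)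
  have hzlam : z + lam ≠ 0 := by
    intro h
    have : z = -lam := by linear_combination h
    rw [this] at hz; simp at hz
  have h1 : HasDerivAt (fun w : ℂ => 1 + w / lam) (1 / lam) z := by
    simpa using ((hasDerivAt_id z).div_const lam).const_add 1
  have hs : (1 + z / lam) ∈ Complex.slitPlane := by
    left
    have h2 : Complex.abs (z / lam) < 1 := by
      rw [map_div₀, div_lt_one ((Complex.abs.nonneg z).trans_lt hz)]
      exact hz
    have h3 : -Complex.abs (z / lam) ≤ (z / lam).re := by
      have := Complex.abs_re_le_abs (z / lam)
      have := abs_le.mp (le_of_eq rfl : |(z/lam).re| ≤ |(z/lam).re|)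
      cases' abs_le.mp (le_refl |(z/lam).re|) with h _
      nlinarith [Complex.abs_re_le_abs (z / lam), abs_le.mp (Complex.abs_re_le_abs (z/lam) : |(z/lam).re| ≤ Complex.abs (z/lam))]
    simp only [Complex.add_re, Complex.one_re]
    nlinarith
  have h := h1.clog hs
  convert h using 1
  field_simp
  rw [add_comm z lam, div_self (by rwa [add_comm] at hzlam)]

lemma cInt_one_div_shift {R : ℝ} (hR : 0 < R) {lam : ℂ} (hlam : 2 * R ≤ Complex.abs lam) :
    (∮ z in C((0:ℂ), R), 1 / (z + lam)) = 0 := by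
  apply circleIntegral.integral_eq_zero_of_hasDerivWithinAt hR.le
    (f := fun w => Complex.log (1 + w / lam))
  intro z hz
  have habs : Complex.abs z < Complex.abs lam := by
    have := abs_of_sphere_p hz; rw [this]; linarith
  have := (log_hasDeriv habs).hasDerivWithinAt (s := sphere (0:ℂ) R)
  simpa [one_div] using this

lemma cInt_D3W {R : ℝ} (hR : 0 < R) {lam : ℂ} (hlam : 2 * R ≤ Complex.abs lam) :
    (∮ z in C((0:ℂ), R), (-4 * lam - 3 * z) / (lam ^ 4 * (z + lam) ^ 2)) = 0 := by
  apply circleIntegral.integral_eq_zero_of_hasDerivWithinAt hR.le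
    (f := fun w => (-3 * Complex.log (1 + w / lam) + lam / (w + lam)) / lam ^ 4)
  intro z hz
  have habs : Complex.abs z < Complex.abs lam := by
    have := abs_of_sphere_p hz; rw [this]; linarith
  have hlam0 : lam ≠ 0 := by
    intro h; rw [h] at habs; simp at habs
    exact absurd ((Complex.abs.nonneg z).trans_lt habs) (by simp)
  have hzlam : z + lam ≠ 0 := by
    intro h
    have : z = -lam := by linear_combination h
    rw [this] at habs; simp at habs
  have h1 : HasDerivAt (fun w => -3 * Complex.log (1 + w / lam)) (-3 * (z + lam)⁻¹) z :=
    (log_hasDeriv habs).const_mul (-3)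
  have h2 : HasDerivAt (fun w : ℂ => lam / (w + lam)) (lam * (-1 / (z + lam) ^ 2)) z := by
    have ha : HasDerivAt (fun w : ℂ => w + lam) 1 z := (hasDerivAt_id z).add_const lam
    have hb := ha.inv hzlam
    have hc := hb.const_mul lam
    simpa [div_eq_mul_inv] using hc
  have h := (h1.add h2).div_const (lam ^ 4)
  apply HasDerivAt.hasDerivWithinAt
  refine h.congr_deriv ?_
  field_simp
  ring

lemma circleIntegral_tsum {R : ℝ} (hR : 0 < R) (F : {p : ℤ × ℤ // p ≠ 0} → ℂ → ℂ)
    (hcont : ∀ p, ContinuousOn (F p) (sphere (0:ℂ) R)) (b : {p : ℤ × ℤ // p ≠ 0} → ℝ)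
    (hb : Summable b) (hFb : ∀ p, ∀ z ∈ sphere (0:ℂ) R, Complex.abs (F p z) ≤ b p) :
    (∮ z in C((0:ℂ), R), ∑' p, F p z) = ∑' p, ∮ z in C((0:ℂ), R), F p z := by
  have hb0 : ∀ p, 0 ≤ b p := fun p =>
    (Complex.abs.nonneg _).trans (hFb p (circleMap 0 R 0) (circleMap_mem_sphere 0 hR.le 0))
  set G : {p : ℤ × ℤ // p ≠ 0} → ℝ → ℂ :=
    fun p θ => deriv (circleMap 0 R) θ • F p (circleMap 0 R θ) with hG
  have hGcont : ∀ p, Continuous (G p) := by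
    intro p
    rw [hG]
    dsimp only
    refine Continuous.smul (f := fun θ => deriv (circleMap 0 R) θ)
      (g := fun θ => F p (circleMap 0 R θ)) ?_ ?_
    · have : (deriv (circleMap 0 R)) = fun θ => circleMap 0 R θ * I := by
        funext θ; exact deriv_circleMap 0 R θ
      rw [this]
      exact (continuous_circleMap 0 R).mul continuous_const
    · exact (hcont p).comp_continuous (continuous_circleMap 0 R)
        (fun θ => circleMap_mem_sphere 0 hR.le θ)
  have hGnorm : ∀ p θ, ‖G p θ‖ ≤ R * b p := by
    intro p θ
    rw [hG]
    simp only [norm_smul, deriv_circleMap]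
    have h1 : ‖circleMap 0 R θ * I‖ = R := by
      rw [norm_mul]
      rw [Complex.norm_eq_abs, Complex.norm_eq_abs, abs_circleMap_zero, Complex.abs_I,
        mul_one, _root_.abs_of_pos hR]
    rw [h1]
    exact mul_le_mul_of_nonneg_left
      (by simpa [Complex.norm_eq_abs] using hFb p _ (circleMap_mem_sphere 0 hR.le θ)) hR.le
  have hGint : ∀ p, Integrable (G p) (volume.restrict (Set.Ioc 0 (2 * Real.pi))) :=
    fun p => (hGcont p).integrableOn_Ioc
  have hsumint : Summable fun p => ∫ θ in Set.Ioc 0 (2 * Real.pi), ‖G p θ‖ := by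
    apply Summable.of_nonneg_of_le
      (fun p => integral_nonneg (fun θ => norm_nonneg _))
      (fun p => ?_) (hb.mul_left (Real.pi * 2 * R))
    calc ∫ θ in Set.Ioc 0 (2 * Real.pi), ‖G p θ‖
        ≤ ∫ _ in Set.Ioc 0 (2 * Real.pi), R * b p := by
          apply setIntegral_mono_on (hGint p).norm (integrableOn_const (by
            rw [Real.volume_Ioc]; exact ENNReal.ofReal_ne_top))
            measurableSet_Ioc
          intro θ _
          exact hGnorm p θ
    _ = Real.pi * 2 * R * b p := by
          rw [setIntegral_const, Real.volume_real_Ioc_of_le Real.two_pi_pos.le, sub_zero,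
            smul_eq_mul]
          ring
  have key := MeasureTheory.integral_tsum_of_summable_integral_norm
    (μ := volume.restrict (Set.Ioc 0 (2 * Real.pi))) (F := G) hGint hsumint
  have hlhs : (∮ z in C((0:ℂ), R), ∑' p, F p z)
      = ∫ θ in Set.Ioc 0 (2 * Real.pi), ∑' p, G p θ := by
    rw [circleIntegral, intervalIntegral.integral_of_le Real.two_pi_pos.le]
    apply integral_congr_ae
    filter_upwards with θ
    rw [hG]
    simp only [smul_eq_mul]
    rw [tsum_mul_left]
  have hrhs : ∀ p, (∮ z in C((0:ℂ), R), F p z) = ∫ θ in Set.Ioc 0 (2 * Real.pi), G p θ := by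
    intro p
    rw [circleIntegral, intervalIntegral.integral_of_le Real.two_pi_pos.le]
  rw [hlhs, ← key]
  exact tsum_congr (fun p => (hrhs p).symm)

lemma intW {R : ℝ} (hR : 0 < R) {lam : ℂ} (hlam : 2 * R ≤ Complex.abs lam) :
    (∮ z in C((0:ℂ), R), (1 / (z + lam) ^ 2 - 1 / lam ^ 2) / z ^ 3)
      = 2 * Real.pi * I * (3 / lam ^ 4) := by
  have hlam0 : lam ≠ 0 := by
    intro h; rw [h] at hlam; simp at hlam; linarith
  have habs0 : 0 < Complex.abs lam := Complex.abs.pos hlam0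
  have hszne : ∀ z ∈ sphere (0:ℂ) R, z ≠ 0 := fun z hz => ne_zero_of_sphere_p hR hz
  have hszlam : ∀ z ∈ sphere (0:ℂ) R, z + lam ≠ 0 := by
    intro z hz h
    have h1 := abs_of_sphere_p hz
    have : z = -lam := by linear_combination h
    rw [this] at h1
    simp at h1
    rw [h1] at hlam
    linarith
  rw [circleIntegral.integral_congr hR.le
    (g := fun z => (-2 / lam ^ 3) * (1 / z ^ 2) +
      ((3 / lam ^ 4) * (1 / z) + (-4 * lam - 3 * z) / (lam ^ 4 * (z + lam) ^ 2)))]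
  · have c1 : CircleIntegrable (fun z : ℂ => (-2 / lam ^ 3) * (1 / z ^ 2)) 0 R := by
      apply ContinuousOn.circleIntegrable hR.le
      exact continuousOn_const.mul (continuousOn_const.div
        (continuousOn_id.pow 2) (fun z hz => pow_ne_zero 2 (hszne z hz)))
    have c2 : CircleIntegrable (fun z : ℂ => (3 / lam ^ 4) * (1 / z)) 0 R := by
      apply ContinuousOn.circleIntegrable hR.le
      exact continuousOn_const.mul (continuousOn_const.div
        continuousOn_id (fun z hz => hszne z hz))
    have c3 : CircleIntegrable (fun z : ℂ => (-4 * lam - 3 * z) / (lam ^ 4 * (z + lam) ^ 2)) 0 R := by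
      apply ContinuousOn.circleIntegrable hR.le
      apply ContinuousOn.div (continuousOn_const.sub (continuousOn_const.mul continuousOn_id))
        (continuousOn_const.mul ((continuousOn_id.add continuousOn_const).pow 2))
      exact fun z hz => mul_ne_zero (pow_ne_zero 4 hlam0) (pow_ne_zero 2 (hszlam z hz))
    have c23 : CircleIntegrable (fun z : ℂ => (3 / lam ^ 4) * (1 / z) +
        (-4 * lam - 3 * z) / (lam ^ 4 * (z + lam) ^ 2)) 0 R := c2.add c3
    rw [circleIntegral_add c1 c23, circleIntegral_add c2 c3]
    rw [circleIntegral.integral_const_mul, circleIntegral.integral_const_mul]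
    rw [cInt_zpow hR (by norm_num), cInt_inv hR, cInt_D3W hR hlam]
    ring
  · intro z hz
    have h1 := hszne z hz
    have h2 := hszlam z hz
    dsimp only
    rw [div_sub_div _ _ (pow_ne_zero 2 h2) (pow_ne_zero 2 hlam0), div_div,
      div_mul_div_comm, div_mul_div_comm,
      div_add_div _ _ (mul_ne_zero (pow_ne_zero 4 hlam0) h1)
        (mul_ne_zero (pow_ne_zero 4 hlam0) (pow_ne_zero 2 h2)),
      div_add_div _ _ (mul_ne_zero (pow_ne_zero 3 hlam0) (pow_ne_zero 2 h1))
        (mul_ne_zero (mul_ne_zero (pow_ne_zero 4 hlam0) h1)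
          (mul_ne_zero (pow_ne_zero 4 hlam0) (pow_ne_zero 2 h2))),
      div_eq_div_iff
        (mul_ne_zero (mul_ne_zero (pow_ne_zero 2 h2) (pow_ne_zero 2 hlam0)) (pow_ne_zero 3 h1))
        (mul_ne_zero (mul_ne_zero (pow_ne_zero 3 hlam0) (pow_ne_zero 2 h1))
          (mul_ne_zero (mul_ne_zero (pow_ne_zero 4 hlam0) h1)
            (mul_ne_zero (pow_ne_zero 4 hlam0) (pow_ne_zero 2 h2))))]
    ring

lemma intZ {R : ℝ} (hR : 0 < R) {lam : ℂ} (hlam : 2 * R ≤ Complex.abs lam) :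
    (∮ z in C((0:ℂ), R), (1 / (z + lam) - 1 / lam + z / lam ^ 2) / z ^ 4)
      = 2 * Real.pi * I * (-1 / lam ^ 4) := by
  have hlam0 : lam ≠ 0 := by
    intro h; rw [h] at hlam; simp at hlam; linarith
  have hszne : ∀ z ∈ sphere (0:ℂ) R, z ≠ 0 := fun z hz => ne_zero_of_sphere_p hR hz
  have hszlam : ∀ z ∈ sphere (0:ℂ) R, z + lam ≠ 0 := by
    intro z hz h
    have h1 := abs_of_sphere_p hz
    have : z = -lam := by linear_combination h
    rw [this] at h1
    simp at h1
    rw [h1] at hlam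
    linarith
  rw [circleIntegral.integral_congr hR.le
    (g := fun z => (1 / lam ^ 3) * (1 / z ^ 2) +
      ((-1 / lam ^ 4) * (1 / z) + (1 / lam ^ 4) * (1 / (z + lam))))]
  · have c1 : CircleIntegrable (fun z : ℂ => (1 / lam ^ 3) * (1 / z ^ 2)) 0 R := by
      apply ContinuousOn.circleIntegrable hR.le
      exact continuousOn_const.mul (continuousOn_const.div
        (continuousOn_id.pow 2) (fun z hz => pow_ne_zero 2 (hszne z hz)))
    have c2 : CircleIntegrable (fun z : ℂ => (-1 / lam ^ 4) * (1 / z)) 0 R := by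
      apply ContinuousOn.circleIntegrable hR.le
      exact continuousOn_const.mul (continuousOn_const.div
        continuousOn_id (fun z hz => hszne z hz))
    have c3 : CircleIntegrable (fun z : ℂ => (1 / lam ^ 4) * (1 / (z + lam))) 0 R := by
      apply ContinuousOn.circleIntegrable hR.le
      exact continuousOn_const.mul (continuousOn_const.div
        (continuousOn_id.add continuousOn_const) (fun z hz => hszlam z hz))
    have c23 : CircleIntegrable (fun z : ℂ => (-1 / lam ^ 4) * (1 / z) +
        (1 / lam ^ 4) * (1 / (z + lam))) 0 R := c2.add c3
    rw [circleIntegral_add c1 c23, circleIntegral_add c2 c3]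
    rw [circleIntegral.integral_const_mul, circleIntegral.integral_const_mul,
      circleIntegral.integral_const_mul]
    rw [cInt_zpow hR (by norm_num), cInt_inv hR, cInt_one_div_shift hR hlam]
    ring
  · intro z hz
    have h1 := hszne z hz
    have h2 := hszlam z hz
    dsimp only
    rw [div_sub_div _ _ h2 hlam0, div_add_div _ _ (mul_ne_zero h2 hlam0) (pow_ne_zero 2 hlam0),
      div_div, div_mul_div_comm, div_mul_div_comm, div_mul_div_comm,
      div_add_div _ _ (mul_ne_zero (pow_ne_zero 4 hlam0) h1)
        (mul_ne_zero (pow_ne_zero 4 hlam0) h2),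
      div_add_div _ _ (mul_ne_zero (pow_ne_zero 3 hlam0) (pow_ne_zero 2 h1))
        (mul_ne_zero (mul_ne_zero (pow_ne_zero 4 hlam0) h1)
          (mul_ne_zero (pow_ne_zero 4 hlam0) h2)),
      div_eq_div_iff
        (mul_ne_zero (mul_ne_zero (mul_ne_zero h2 hlam0) (pow_ne_zero 2 hlam0)) (pow_ne_zero 4 h1))
        (mul_ne_zero (mul_ne_zero (pow_ne_zero 3 hlam0) (pow_ne_zero 2 h1))
          (mul_ne_zero (mul_ne_zero (pow_ne_zero 4 hlam0) h1)
            (mul_ne_zero (pow_ne_zero 4 hlam0) h2)))]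
    ring


lemma two_eps_le (hτ : 0 < τ.im) {ε : ℝ} (hε2 : ε ≤ rr τ hτ / 2) (p : {p : ℤ × ℤ // p ≠ 0}) :
    2 * ε ≤ Complex.abs (lpt τ p.1) := by
  have := rr_le hτ p; linarith

lemma contWt (hτ : 0 < τ.im) {ε : ℝ} (hε2 : ε ≤ rr τ hτ / 2) (p : {p : ℤ × ℤ // p ≠ 0}) :
    ContinuousOn (Wt τ p) (sphere (0:ℂ) ε) := by
  apply ContinuousOn.sub _ continuousOn_const
  apply ContinuousOn.div continuousOn_const ((continuousOn_id.add continuousOn_const).pow 2)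
  exact fun x hx => pow_ne_zero 2 (add_lpt_ne hτ hε2 hx p)

lemma contZt (hτ : 0 < τ.im) {ε : ℝ} (hε2 : ε ≤ rr τ hτ / 2) (p : {p : ℤ × ℤ // p ≠ 0}) :
    ContinuousOn (Zt τ p) (sphere (0:ℂ) ε) := by
  apply ContinuousOn.add
  · apply ContinuousOn.sub _ continuousOn_const
    apply ContinuousOn.div continuousOn_const (continuousOn_id.add continuousOn_const)
    exact fun x hx => add_lpt_ne hτ hε2 hx p
  · exact continuousOn_id.div continuousOn_const (fun x _ => pow_ne_zero 2 (lpt_ne_zero hτ p))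

lemma J3 (hτ : 0 < τ.im) {ε : ℝ} (hε : 0 < ε) (hε2 : ε ≤ rr τ hτ / 2) :
    (∮ z in C((0:ℂ), ε), SW τ z / z ^ 3)
      = 2 * Real.pi * I * 3 * ∑' p : {p : ℤ × ℤ // p ≠ 0}, 1 / (lpt τ p.1) ^ 4 := by
  have h1 : (∮ z in C((0:ℂ), ε), SW τ z / z ^ 3)
      = ∮ z in C((0:ℂ), ε), ∑' p, Wt τ p z / z ^ 3 := by
    apply circleIntegral.integral_congr hε.le
    intro z hz
    dsimp only
    rw [show SW τ z = ∑' p, Wt τ p z from rfl]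
    exact tsum_div_const.symm
  rw [h1, circleIntegral_tsum hε (fun p z => Wt τ p z / z ^ 3)
    (fun p => (contWt hτ hε2 p).div (continuousOn_id.pow 3)
      (fun x hx => pow_ne_zero 3 (ne_zero_of_sphere_p hε hx)))
    (fun p => (10 / ε ^ 2) / Complex.abs (lpt τ p.1) ^ 3)
    (summable_Wt_bound hτ (10 / ε ^ 2)) ?_]
  · have h2 : ∀ p : {p : ℤ × ℤ // p ≠ 0},
        (∮ z in C((0:ℂ), ε), Wt τ p z / z ^ 3)
          = (2 * Real.pi * I * 3) * (1 / (lpt τ p.1) ^ 4) := by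
      intro p
      have := intW hε (two_eps_le hτ hε2 p)
      rw [show (fun z : ℂ => Wt τ p z / z ^ 3)
        = fun z => (1 / (z + lpt τ p.1) ^ 2 - 1 / (lpt τ p.1) ^ 2) / z ^ 3 from rfl]
      rw [this]
      ring
    rw [tsum_congr h2, tsum_mul_left]
  · intro p z hz
    have hza : Complex.abs z = ε := abs_of_sphere_p hz
    rw [map_div₀, map_pow, hza]
    have hb := Wt_bound hτ hε hε2 hz p
    have h3 : (0:ℝ) < Complex.abs (lpt τ p.1) := (rr_pos hτ).trans_le (rr_le hτ p)
    calc Complex.abs (Wt τ p z) / ε ^ 3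
        ≤ (10 * ε / Complex.abs (lpt τ p.1) ^ 3) / ε ^ 3 := by gcongr
    _ = 10 / ε ^ 2 / Complex.abs (lpt τ p.1) ^ 3 := by field_simp
  
lemma J4 (hτ : 0 < τ.im) {ε : ℝ} (hε : 0 < ε) (hε2 : ε ≤ rr τ hτ / 2) :
    (∮ z in C((0:ℂ), ε), SZ τ z / z ^ 4)
      = 2 * Real.pi * I * (-1) * ∑' p : {p : ℤ × ℤ // p ≠ 0}, 1 / (lpt τ p.1) ^ 4 := by
  have h1 : (∮ z in C((0:ℂ), ε), SZ τ z / z ^ 4)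
      = ∮ z in C((0:ℂ), ε), ∑' p, Zt τ p z / z ^ 4 := by
    apply circleIntegral.integral_congr hε.le
    intro z hz
    dsimp only
    rw [show SZ τ z = ∑' p, Zt τ p z from rfl]
    exact tsum_div_const.symm
  rw [h1, circleIntegral_tsum hε (fun p z => Zt τ p z / z ^ 4)
    (fun p => (contZt hτ hε2 p).div (continuousOn_id.pow 4)
      (fun x hx => pow_ne_zero 4 (ne_zero_of_sphere_p hε hx)))
    (fun p => (2 / ε ^ 2) / Complex.abs (lpt τ p.1) ^ 3)
    (summable_Wt_bound hτ (2 / ε ^ 2)) ?_]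
  · have h2 : ∀ p : {p : ℤ × ℤ // p ≠ 0},
        (∮ z in C((0:ℂ), ε), Zt τ p z / z ^ 4)
          = (2 * Real.pi * I * (-1)) * (1 / (lpt τ p.1) ^ 4) := by
      intro p
      have := intZ hε (two_eps_le hτ hε2 p)
      rw [show (fun z : ℂ => Zt τ p z / z ^ 4)
        = fun z => (1 / (z + lpt τ p.1) - 1 / lpt τ p.1 + z / (lpt τ p.1) ^ 2) / z ^ 4 from rfl]
      rw [this]
      ring
    rw [tsum_congr h2, tsum_mul_left]
  · intro p z hz
    have hza : Complex.abs z = ε := abs_of_sphere_p hz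
    rw [map_div₀, map_pow, hza]
    have hb := Zt_bound hτ hε hε2 hz p
    have h3 : (0:ℝ) < Complex.abs (lpt τ p.1) := (rr_pos hτ).trans_le (rr_le hτ p)
    calc Complex.abs (Zt τ p z) / ε ^ 4
        ≤ (2 * ε ^ 2 / Complex.abs (lpt τ p.1) ^ 3) / ε ^ 4 := by gcongr
    _ = 2 / ε ^ 2 / Complex.abs (lpt τ p.1) ^ 3 := by field_simp


/-- the constant `a = (π²/3)E₂ - π/Im τ` -/
noncomputable def aa (τ E₂ : ℂ) : ℂ := (Real.pi : ℂ) ^ 2 / 3 * E₂ - ((Real.pi / τ.im : ℝ) : ℂ)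
/-- `C₁(ε) = 1 - (π/Im τ)ε²` -/
noncomputable def CC (τ : ℂ) (ε : ℝ) : ℂ := 1 - ((Real.pi / τ.im : ℝ) : ℂ) * (ε : ℂ) ^ 2
/-- the remainder function -/
noncomputable def G6 (τ E₂ : ℂ) (ε : ℝ) (z : ℂ) : ℂ :=
  2 * (SW τ z + aa τ E₂) * SZ τ z / z ^ 2
  + SW τ z * (CC τ ε * ((SW τ z + aa τ E₂) + aa τ E₂) - 2 * aa τ E₂) / z
  + (SW τ z + aa τ E₂) ^ 2 * SZ τ z
  - aa τ E₂ * (SW τ z + aa τ E₂) ^ 2 * z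
noncomputable def MM (τ E₂ : ℂ) (hτ : 0 < τ.im) : ℝ :=
  Complex.abs (aa τ E₂) + 10 * (rr τ hτ / 2) * S3 τ
noncomputable def cbd (τ : ℂ) (hτ : 0 < τ.im) : ℝ :=
  1 + |Real.pi / τ.im| * (rr τ hτ / 2) ^ 2
/-- uniform bound for G6 -/
noncomputable def KK (τ E₂ : ℂ) (hτ : 0 < τ.im) : ℝ :=
  (4 * MM τ E₂ hτ * S3 τ) + 10 * S3 τ * (2 * cbd τ hτ * MM τ E₂ hτ + 2 * MM τ E₂ hτ)
    + 2 * (MM τ E₂ hτ) ^ 2 * (rr τ hτ / 2) ^ 2 * S3 τ + (MM τ E₂ hτ) ^ 3 * (rr τ hτ / 2)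

lemma abs_sub_le'' (x y : ℂ) : Complex.abs (x - y) ≤ Complex.abs x + Complex.abs y := by
  rw [sub_eq_add_neg]
  exact (Complex.abs.add_le _ _).trans (by rw [map_neg_eq_map])

lemma MM_nonneg (E₂ : ℂ) (hτ : 0 < τ.im) : 0 ≤ MM τ E₂ hτ := by
  have := S3_nonneg (τ := τ)
  have := (rr_pos hτ).le
  have := Complex.abs.nonneg (aa τ E₂)
  rw [MM]; positivity

lemma abs_aa_le (E₂ : ℂ) (hτ : 0 < τ.im) : Complex.abs (aa τ E₂) ≤ MM τ E₂ hτ := by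
  have := S3_nonneg (τ := τ)
  have := (rr_pos hτ).le
  rw [MM]; nlinarith

lemma h_bound (E₂ : ℂ) (hτ : 0 < τ.im) {ε : ℝ} (hε : 0 < ε) (hε2 : ε ≤ rr τ hτ / 2) {z : ℂ}
    (hz : z ∈ sphere (0:ℂ) ε) : Complex.abs (SW τ z + aa τ E₂) ≤ MM τ E₂ hτ := by
  have h1 := SW_bound hτ hε hε2 hz
  have h3 := S3_nonneg (τ := τ)
  calc Complex.abs (SW τ z + aa τ E₂) ≤ Complex.abs (SW τ z) + Complex.abs (aa τ E₂) :=
    Complex.abs.add_le _ _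
  _ ≤ 10 * ε * S3 τ + Complex.abs (aa τ E₂) := by linarith
  _ ≤ MM τ E₂ hτ := by rw [MM]; nlinarith

lemma CC_bound (hτ : 0 < τ.im) {ε : ℝ} (hε : 0 < ε) (hε2 : ε ≤ rr τ hτ / 2) :
    Complex.abs (CC τ ε) ≤ cbd τ hτ := by
  calc Complex.abs (CC τ ε)
      ≤ Complex.abs (1:ℂ) + Complex.abs (((Real.pi / τ.im : ℝ) : ℂ) * (ε : ℂ) ^ 2) := by
        rw [CC]; exact abs_sub_le'' _ _
  _ = 1 + |Real.pi / τ.im| * ε ^ 2 := by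
        rw [map_one, map_mul, map_pow, Complex.abs_ofReal, Complex.abs_ofReal, _root_.sq_abs]
  _ ≤ cbd τ hτ := by
        rw [cbd]
        have h2 : ε ^ 2 ≤ (rr τ hτ / 2) ^ 2 := by nlinarith
        nlinarith [abs_nonneg (Real.pi / τ.im)]

lemma G6_bound (E₂ : ℂ) (hτ : 0 < τ.im) {ε : ℝ} (hε : 0 < ε) (hε2 : ε ≤ rr τ hτ / 2) {z : ℂ}
    (hz : z ∈ sphere (0:ℂ) ε) : Complex.abs (G6 τ E₂ ε z) ≤ KK τ E₂ hτ := by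
  have habsz : Complex.abs z = ε := abs_of_sphere_p hz
  have hS3 := S3_nonneg (τ := τ)
  have hSW := SW_bound hτ hε hε2 hz
  have hSZ := SZ_bound hτ hε hε2 hz
  have hh := h_bound E₂ hτ hε hε2 hz
  have hM := MM_nonneg (τ := τ) E₂ hτ
  have hA := abs_aa_le (τ := τ) E₂ hτ
  have hC := CC_bound hτ hε hε2
  have hcb : (0:ℝ) ≤ cbd τ hτ := by
    rw [cbd]; positivity
  have ht1 : Complex.abs (2 * (SW τ z + aa τ E₂) * SZ τ z / z ^ 2) ≤ 4 * MM τ E₂ hτ * S3 τ := by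
    rw [map_div₀, map_mul, map_mul, map_pow, habsz, Complex.abs_two]
    calc 2 * Complex.abs (SW τ z + aa τ E₂) * Complex.abs (SZ τ z) / ε ^ 2
        ≤ 2 * MM τ E₂ hτ * (2 * ε ^ 2 * S3 τ) / ε ^ 2 := by gcongr
    _ = 4 * MM τ E₂ hτ * S3 τ := by field_simp; ring
  have hin : Complex.abs (CC τ ε * ((SW τ z + aa τ E₂) + aa τ E₂) - 2 * aa τ E₂)
      ≤ 2 * cbd τ hτ * MM τ E₂ hτ + 2 * MM τ E₂ hτ := by
    calc Complex.abs (CC τ ε * ((SW τ z + aa τ E₂) + aa τ E₂) - 2 * aa τ E₂)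
        ≤ Complex.abs (CC τ ε * ((SW τ z + aa τ E₂) + aa τ E₂))
          + Complex.abs (2 * aa τ E₂) := abs_sub_le'' _ _
    _ = Complex.abs (CC τ ε) * Complex.abs ((SW τ z + aa τ E₂) + aa τ E₂)
          + 2 * Complex.abs (aa τ E₂) := by rw [map_mul, map_mul, Complex.abs_two]
    _ ≤ cbd τ hτ * (MM τ E₂ hτ + MM τ E₂ hτ) + 2 * MM τ E₂ hτ := by
        have h4 : Complex.abs ((SW τ z + aa τ E₂) + aa τ E₂) ≤ MM τ E₂ hτ + MM τ E₂ hτ :=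
          (Complex.abs.add_le _ _).trans (by linarith)
        have h5 := mul_le_mul hC h4 (Complex.abs.nonneg _) hcb
        linarith
    _ = 2 * cbd τ hτ * MM τ E₂ hτ + 2 * MM τ E₂ hτ := by ring
  have ht2 : Complex.abs (SW τ z * (CC τ ε * ((SW τ z + aa τ E₂) + aa τ E₂) - 2 * aa τ E₂) / z)
      ≤ 10 * S3 τ * (2 * cbd τ hτ * MM τ E₂ hτ + 2 * MM τ E₂ hτ) := by
    rw [map_div₀, map_mul, habsz]
    calc Complex.abs (SW τ z) *
          Complex.abs (CC τ ε * ((SW τ z + aa τ E₂) + aa τ E₂) - 2 * aa τ E₂) / ε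
        ≤ (10 * ε * S3 τ) * (2 * cbd τ hτ * MM τ E₂ hτ + 2 * MM τ E₂ hτ) / ε := by gcongr
    _ = 10 * S3 τ * (2 * cbd τ hτ * MM τ E₂ hτ + 2 * MM τ E₂ hτ) := by field_simp
  have ht3 : Complex.abs ((SW τ z + aa τ E₂) ^ 2 * SZ τ z)
      ≤ 2 * (MM τ E₂ hτ) ^ 2 * (rr τ hτ / 2) ^ 2 * S3 τ := by
    rw [map_mul, map_pow]
    calc Complex.abs (SW τ z + aa τ E₂) ^ 2 * Complex.abs (SZ τ z)
        ≤ (MM τ E₂ hτ) ^ 2 * (2 * ε ^ 2 * S3 τ) := by gcongr <;> positivity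
    _ ≤ (MM τ E₂ hτ) ^ 2 * (2 * (rr τ hτ / 2) ^ 2 * S3 τ) := by
        have h2 : ε ^ 2 ≤ (rr τ hτ / 2) ^ 2 := by nlinarith
        gcongr
    _ = 2 * (MM τ E₂ hτ) ^ 2 * (rr τ hτ / 2) ^ 2 * S3 τ := by ring
  have ht4 : Complex.abs (aa τ E₂ * (SW τ z + aa τ E₂) ^ 2 * z)
      ≤ (MM τ E₂ hτ) ^ 3 * (rr τ hτ / 2) := by
    rw [map_mul, map_mul, map_pow, habsz]
    calc Complex.abs (aa τ E₂) * Complex.abs (SW τ z + aa τ E₂) ^ 2 * ε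
        ≤ MM τ E₂ hτ * (MM τ E₂ hτ) ^ 2 * (rr τ hτ / 2) := by gcongr <;> positivity
    _ = (MM τ E₂ hτ) ^ 3 * (rr τ hτ / 2) := by ring
  rw [G6, KK]
  calc Complex.abs (2 * (SW τ z + aa τ E₂) * SZ τ z / z ^ 2
        + SW τ z * (CC τ ε * ((SW τ z + aa τ E₂) + aa τ E₂) - 2 * aa τ E₂) / z
        + (SW τ z + aa τ E₂) ^ 2 * SZ τ z
        - aa τ E₂ * (SW τ z + aa τ E₂) ^ 2 * z)
      ≤ Complex.abs (2 * (SW τ z + aa τ E₂) * SZ τ z / z ^ 2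
        + SW τ z * (CC τ ε * ((SW τ z + aa τ E₂) + aa τ E₂) - 2 * aa τ E₂) / z
        + (SW τ z + aa τ E₂) ^ 2 * SZ τ z)
        + Complex.abs (aa τ E₂ * (SW τ z + aa τ E₂) ^ 2 * z) := abs_sub_le'' _ _
  _ ≤ Complex.abs (2 * (SW τ z + aa τ E₂) * SZ τ z / z ^ 2
        + SW τ z * (CC τ ε * ((SW τ z + aa τ E₂) + aa τ E₂) - 2 * aa τ E₂) / z)
        + Complex.abs ((SW τ z + aa τ E₂) ^ 2 * SZ τ z)
        + Complex.abs (aa τ E₂ * (SW τ z + aa τ E₂) ^ 2 * z) := by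
      have := Complex.abs.add_le (2 * (SW τ z + aa τ E₂) * SZ τ z / z ^ 2
        + SW τ z * (CC τ ε * ((SW τ z + aa τ E₂) + aa τ E₂) - 2 * aa τ E₂) / z)
        ((SW τ z + aa τ E₂) ^ 2 * SZ τ z)
      linarith
  _ ≤ Complex.abs (2 * (SW τ z + aa τ E₂) * SZ τ z / z ^ 2)
        + Complex.abs (SW τ z * (CC τ ε * ((SW τ z + aa τ E₂) + aa τ E₂) - 2 * aa τ E₂) / z)
        + Complex.abs ((SW τ z + aa τ E₂) ^ 2 * SZ τ z)
        + Complex.abs (aa τ E₂ * (SW τ z + aa τ E₂) ^ 2 * z) := by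
      have := Complex.abs.add_le (2 * (SW τ z + aa τ E₂) * SZ τ z / z ^ 2)
        (SW τ z * (CC τ ε * ((SW τ z + aa τ E₂) + aa τ E₂) - 2 * aa τ E₂) / z)
      linarith
  _ ≤ _ := by linarith

lemma contG6 (E₂ : ℂ) (hτ : 0 < τ.im) {ε : ℝ} (hε : 0 < ε) (hε2 : ε ≤ rr τ hτ / 2) :
    ContinuousOn (G6 τ E₂ ε) (sphere (0:ℂ) ε) := by
  have cW := continuousOn_SW hτ hε hε2
  have cZ := continuousOn_SZ hτ hε hε2
  have hzne : ∀ z ∈ sphere (0:ℂ) ε, z ≠ 0 := fun z hz => ne_zero_of_sphere_p hε hz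
  have ch : ContinuousOn (fun z => SW τ z + aa τ E₂) (sphere (0:ℂ) ε) :=
    cW.add continuousOn_const
  apply ContinuousOn.sub
  apply ContinuousOn.add
  apply ContinuousOn.add
  · exact ((continuousOn_const.mul ch).mul cZ).div (continuousOn_id.pow 2)
      (fun z hz => pow_ne_zero 2 (hzne z hz))
  · exact (cW.mul ((continuousOn_const.mul (ch.add continuousOn_const)).sub
      continuousOn_const)).div continuousOn_id hzne
  · exact (ch.pow 2).mul cZ
  · exact (continuousOn_const.mul (ch.pow 2)).mul continuousOn_id

lemma cInt_cdiv {R : ℝ} (hR : 0 < R) (c : ℂ) {n : ℕ} (hn : n ≠ 1) :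
    (∮ z in C((0:ℂ), R), c / z ^ n) = 0 := by
  rw [circleIntegral.integral_congr hR.le (g := fun z => c * (1 / z ^ n))
    (fun z hz => by dsimp only; ring)]
  rw [circleIntegral.integral_const_mul, cInt_zpow hR hn, mul_zero]

lemma cInt_cdiv_one {R : ℝ} (hR : 0 < R) (c : ℂ) :
    (∮ z in C((0:ℂ), R), c / z) = c * (2 * Real.pi * I) := by
  rw [circleIntegral.integral_congr hR.le (g := fun z => c * (1 / z))
    (fun z hz => by dsimp only; ring)]
  rw [circleIntegral.integral_const_mul, cInt_inv hR]

lemma main_eq (E₂ : ℂ) (hτ : 0 < τ.im) {ε : ℝ} (hε : 0 < ε) (hε2 : ε ≤ rr τ hτ / 2) :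
    (∮ z in C((0:ℂ), ε), (Phat τ E₂ z ^ 2 * Zhat τ E₂ z))
      = 2 * Real.pi * I * ((6 * CC τ ε - 1)
          * (∑' p : {p : ℤ × ℤ // p ≠ 0}, 1 / (lpt τ p.1) ^ 4)
          + (CC τ ε - 2) * aa τ E₂ ^ 2)
        + ∮ z in C((0:ℂ), ε), G6 τ E₂ ε z := by
  have hzne : ∀ z ∈ sphere (0:ℂ) ε, z ≠ 0 := fun z hz => ne_zero_of_sphere_p hε hz
  have cW := continuousOn_SW hτ hε hε2
  have cZ := continuousOn_SZ hτ hε hε2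
  -- the six pieces
  have hEq : Set.EqOn (fun z => Phat τ E₂ z ^ 2 * Zhat τ E₂ z)
      (fun z => CC τ ε / z ^ 5 + (SZ τ z / z ^ 4
        + ((2 * CC τ ε * aa τ E₂ - aa τ E₂) / z ^ 3
        + (2 * CC τ ε * SW τ z / z ^ 3
        + (((CC τ ε - 2) * aa τ E₂ ^ 2) / z + G6 τ E₂ ε z)))))
      (sphere (0:ℂ) ε) := by
    intro z hz
    have hz0 : z ≠ 0 := hzne z hz
    have h5 : z ^ 5 ≠ 0 := pow_ne_zero 5 hz0
    have habs : Complex.abs z = ε := abs_of_sphere_p hz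
    have hconj : (starRingEnd ℂ) z = (ε : ℂ) ^ 2 / z := by
      rw [eq_div_iff hz0, mul_comm, Complex.mul_conj, Complex.normSq_eq_abs, habs]
      push_cast
      ring
    have hP : Phat τ E₂ z = 1 / z ^ 2 + (SW τ z + aa τ E₂) := by
      rw [Phat, wp, aa]
      rw [show (∑' p : {p : ℤ × ℤ // p ≠ 0},
        (1 / (z + lpt τ p.1) ^ 2 - 1 / (lpt τ p.1) ^ 2)) = SW τ z from rfl]
      ring
    have hZ : Zhat τ E₂ z = CC τ ε * (1 / z) + SZ τ z - aa τ E₂ * z := by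
      rw [Zhat, wzeta, hconj, aa, CC]
      rw [show (∑' p : {p : ℤ × ℤ // p ≠ 0},
        (1 / (z + lpt τ p.1) - 1 / lpt τ p.1 + z / (lpt τ p.1) ^ 2)) = SZ τ z from rfl]
      ring
    dsimp only
    rw [hP, hZ, G6]
    have hL1 : (1 / z ^ 2 + (SW τ z + aa τ E₂)) ^ 2
        * (CC τ ε * (1 / z) + SZ τ z - aa τ E₂ * z)
        = ((1 + (SW τ z + aa τ E₂) * z ^ 2) ^ 2
            * (CC τ ε + SZ τ z * z - aa τ E₂ * z ^ 2)) / z ^ 5 := by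
      rw [eq_div_iff h5]
      field_simp
    rw [hL1]
    have e2 : SZ τ z / z ^ 4 = SZ τ z * z / z ^ 5 := by
      rw [div_eq_div_iff (pow_ne_zero 4 hz0) h5]; ring
    have e3 : (2 * CC τ ε * aa τ E₂ - aa τ E₂) / z ^ 3
        = (2 * CC τ ε * aa τ E₂ - aa τ E₂) * z ^ 2 / z ^ 5 := by
      rw [div_eq_div_iff (pow_ne_zero 3 hz0) h5]; ring
    have e4 : 2 * CC τ ε * SW τ z / z ^ 3 = 2 * CC τ ε * SW τ z * z ^ 2 / z ^ 5 := by
      rw [div_eq_div_iff (pow_ne_zero 3 hz0) h5]; ring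
    have e5 : ((CC τ ε - 2) * aa τ E₂ ^ 2) / z = ((CC τ ε - 2) * aa τ E₂ ^ 2) * z ^ 4 / z ^ 5 := by
      rw [div_eq_div_iff hz0 h5]; ring
    have e6a : 2 * (SW τ z + aa τ E₂) * SZ τ z / z ^ 2
        = 2 * (SW τ z + aa τ E₂) * SZ τ z * z ^ 3 / z ^ 5 := by
      rw [div_eq_div_iff (pow_ne_zero 2 hz0) h5]; ring
    have e6b : SW τ z * (CC τ ε * ((SW τ z + aa τ E₂) + aa τ E₂) - 2 * aa τ E₂) / z
        = SW τ z * (CC τ ε * ((SW τ z + aa τ E₂) + aa τ E₂) - 2 * aa τ E₂) * z ^ 4 / z ^ 5 := by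
      rw [div_eq_div_iff hz0 h5]; ring
    have e6c : (SW τ z + aa τ E₂) ^ 2 * SZ τ z
        = (SW τ z + aa τ E₂) ^ 2 * SZ τ z * z ^ 5 / z ^ 5 := by
      rw [eq_div_iff h5]
    have e6d : aa τ E₂ * (SW τ z + aa τ E₂) ^ 2 * z
        = aa τ E₂ * (SW τ z + aa τ E₂) ^ 2 * z ^ 6 / z ^ 5 := by
      rw [eq_div_iff h5]; ring
    rw [e2, e3, e4, e5, e6a, e6b, e6c, e6d]
    simp only [← add_div, ← sub_div]
    rw [div_eq_div_iff h5 h5]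
    ring
  rw [circleIntegral.integral_congr hε.le hEq]
  -- integrabilities
  have c1 : CircleIntegrable (fun z : ℂ => CC τ ε / z ^ 5) 0 ε :=
    ContinuousOn.circleIntegrable hε.le (continuousOn_const.div
      (continuousOn_id.pow 5) (fun z hz => pow_ne_zero 5 (hzne z hz)))
  have c2 : CircleIntegrable (fun z : ℂ => SZ τ z / z ^ 4) 0 ε :=
    ContinuousOn.circleIntegrable hε.le (cZ.div (continuousOn_id.pow 4)
      (fun z hz => pow_ne_zero 4 (hzne z hz)))
  have c3 : CircleIntegrable (fun z : ℂ => (2 * CC τ ε * aa τ E₂ - aa τ E₂) / z ^ 3) 0 ε :=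
    ContinuousOn.circleIntegrable hε.le (continuousOn_const.div
      (continuousOn_id.pow 3) (fun z hz => pow_ne_zero 3 (hzne z hz)))
  have c4 : CircleIntegrable (fun z : ℂ => 2 * CC τ ε * SW τ z / z ^ 3) 0 ε :=
    ContinuousOn.circleIntegrable hε.le ((continuousOn_const.mul cW).div
      (continuousOn_id.pow 3) (fun z hz => pow_ne_zero 3 (hzne z hz)))
  have c5 : CircleIntegrable (fun z : ℂ => ((CC τ ε - 2) * aa τ E₂ ^ 2) / z) 0 ε :=
    ContinuousOn.circleIntegrable hε.le (continuousOn_const.div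
      continuousOn_id hzne)
  have c6 : CircleIntegrable (G6 τ E₂ ε) 0 ε :=
    ContinuousOn.circleIntegrable hε.le (contG6 E₂ hτ hε hε2)
  have c56 : CircleIntegrable (fun z : ℂ => ((CC τ ε - 2) * aa τ E₂ ^ 2) / z
      + G6 τ E₂ ε z) 0 ε := c5.add c6
  have c456 : CircleIntegrable (fun z : ℂ => 2 * CC τ ε * SW τ z / z ^ 3
      + (((CC τ ε - 2) * aa τ E₂ ^ 2) / z + G6 τ E₂ ε z)) 0 ε := c4.add c56
  have c3456 : CircleIntegrable (fun z : ℂ => (2 * CC τ ε * aa τ E₂ - aa τ E₂) / z ^ 3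
      + (2 * CC τ ε * SW τ z / z ^ 3
        + (((CC τ ε - 2) * aa τ E₂ ^ 2) / z + G6 τ E₂ ε z))) 0 ε := c3.add c456
  have c23456 : CircleIntegrable (fun z : ℂ => SZ τ z / z ^ 4
      + ((2 * CC τ ε * aa τ E₂ - aa τ E₂) / z ^ 3
      + (2 * CC τ ε * SW τ z / z ^ 3
        + (((CC τ ε - 2) * aa τ E₂ ^ 2) / z + G6 τ E₂ ε z)))) 0 ε := c2.add c3456
  rw [circleIntegral_add c1 c23456, circleIntegral_add c2 c3456, circleIntegral_add c3 c456,
    circleIntegral_add c4 c56, circleIntegral_add c5 c6]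
  have v4 : (∮ z in C((0:ℂ), ε), 2 * CC τ ε * SW τ z / z ^ 3)
      = 2 * CC τ ε * ∮ z in C((0:ℂ), ε), SW τ z / z ^ 3 := by
    rw [← circleIntegral.integral_const_mul]
    apply circleIntegral.integral_congr hε.le
    intro z hz
    dsimp only
    ring
  rw [v4, cInt_cdiv hε _ (by norm_num : (5:ℕ) ≠ 1), cInt_cdiv hε _ (by norm_num : (3:ℕ) ≠ 1),
    cInt_cdiv_one hε, J3 hτ hε hε2, J4 hτ hε hε2]
  ring


end ResWork

open ResWork in
/-- `Res_{z=0}(P̂² Ẑ dz) = π⁴(E₄ - Ê₂²)/9`, given `G₄ = (π⁴/45) E₄`. -/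
theorem res_Phat_sq_Zhat (τ E₂ E₄ : ℂ) (hτ : 0 < τ.im)
    (hG₄ : Gk τ 4 = ((Real.pi : ℂ) ^ 4 / 45) * E₄) :
    IsRes (fun z => (Phat τ E₂ z) ^ 2 * Zhat τ E₂ z) 0
      ((Real.pi : ℂ) ^ 4 * (E₄ - (Ehat2 τ E₂) ^ 2) / 9) := by
  have hρ := rr_pos hτ
  have hmem : Set.Ioo (0:ℝ) (rr τ hτ / 2) ∈ 𝓝[>] (0:ℝ) :=
    Ioo_mem_nhdsGT_of_mem ⟨le_refl 0, by linarith⟩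
  have h2πI : (2 * (Real.pi : ℂ) * I) ≠ 0 := by
    simp [Real.pi_ne_zero, Complex.I_ne_zero]
  have hpi : ((Real.pi : ℝ) : ℂ) ≠ 0 := Complex.ofReal_ne_zero.mpr Real.pi_ne_zero
  have him : ((τ.im : ℝ) : ℂ) ≠ 0 := Complex.ofReal_ne_zero.mpr (ne_of_gt hτ)
  have haa : aa τ E₂ = (Real.pi : ℂ) ^ 2 / 3 * Ehat2 τ E₂ := by
    rw [aa, Ehat2]
    push_cast
    field_simp
  have hval : (Real.pi : ℂ) ^ 4 * (E₄ - (Ehat2 τ E₂) ^ 2) / 9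
      = 5 * (∑' p : {p : ℤ × ℤ // p ≠ 0}, 1 / (lpt τ p.1) ^ 4) - aa τ E₂ ^ 2 := by
    rw [show (∑' p : {p : ℤ × ℤ // p ≠ 0}, 1 / (lpt τ p.1) ^ 4) = Gk τ 4 from rfl, hG₄, haa]
    ring
  rw [IsRes, hval]
  set G4 : ℂ := ∑' p : {p : ℤ × ℤ // p ≠ 0}, 1 / (lpt τ p.1) ^ 4 with hG4def
  -- limit of the explicit formula
  have T1 : Tendsto (fun ε : ℝ => (6 * CC τ ε - 1) * G4 + (CC τ ε - 2) * aa τ E₂ ^ 2)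
      (𝓝[>] (0:ℝ)) (𝓝 (5 * G4 - aa τ E₂ ^ 2)) := by
    have hcc : Continuous (fun ε : ℝ => CC τ ε) := by
      have : (fun ε : ℝ => CC τ ε)
          = fun ε : ℝ => 1 - ((Real.pi / τ.im : ℝ) : ℂ) * ((ε:ℂ)) ^ 2 := by
        funext ε; rw [CC]
      rw [this]
      exact continuous_const.sub (continuous_const.mul (Complex.continuous_ofReal.pow 2))
    have hcont : Continuous (fun ε : ℝ => (6 * CC τ ε - 1) * G4 + (CC τ ε - 2) * aa τ E₂ ^ 2) := by
      exact (((continuous_const.mul hcc).sub continuous_const).mul continuous_const).add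
        (((hcc.sub continuous_const)).mul continuous_const)
    have h0 : CC τ 0 = 1 := by rw [CC]; push_cast; ring
    have := hcont.tendsto 0
    rw [show (6 * CC τ 0 - 1) * G4 + (CC τ 0 - 2) * aa τ E₂ ^ 2
      = 5 * G4 - aa τ E₂ ^ 2 by rw [h0]; ring] at this
    exact this.mono_left nhdsWithin_le_nhds
  have T2 : Tendsto (fun ε : ℝ => (2 * (Real.pi : ℂ) * I)⁻¹ * ∮ z in C((0:ℂ), ε), G6 τ E₂ ε z)
      (𝓝[>] (0:ℝ)) (𝓝 0) := by
    have hbd : ∀ᶠ ε in 𝓝[>] (0:ℝ),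
        ‖(2 * (Real.pi : ℂ) * I)⁻¹ * ∮ z in C((0:ℂ), ε), G6 τ E₂ ε z‖ ≤ ε * KK τ E₂ hτ := by
      filter_upwards [hmem] with ε hε
      have hb := circleIntegral.norm_integral_le_of_norm_le_const (c := (0:ℂ)) hε.1.le
        (f := G6 τ E₂ ε) (C := KK τ E₂ hτ) (fun z hz => by
          simpa [Complex.norm_eq_abs] using G6_bound E₂ hτ hε.1 hε.2.le hz)
      rw [norm_mul]
      have hn : ‖(2 * (Real.pi : ℂ) * I)⁻¹‖ = (2 * Real.pi)⁻¹ := by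
        rw [norm_inv, norm_mul, norm_mul]
        simp [Complex.norm_eq_abs, Complex.abs_I, Complex.abs_ofReal,
          _root_.abs_of_pos Real.pi_pos]
      rw [hn]
      calc (2 * Real.pi)⁻¹ * ‖∮ z in C((0:ℂ), ε), G6 τ E₂ ε z‖
          ≤ (2 * Real.pi)⁻¹ * (2 * Real.pi * ε * KK τ E₂ hτ) := by
            apply mul_le_mul_of_nonneg_left hb (by positivity)
      _ = ε * KK τ E₂ hτ := by
            field_simp
    have hto : Tendsto (fun ε : ℝ => ε * KK τ E₂ hτ) (𝓝[>] (0:ℝ)) (𝓝 0) := by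
      have : Tendsto (fun ε : ℝ => ε * KK τ E₂ hτ) (𝓝 0) (𝓝 (0 * KK τ E₂ hτ)) :=
        (continuous_id.mul continuous_const).tendsto 0
      rw [zero_mul] at this
      exact this.mono_left nhdsWithin_le_nhds
    exact squeeze_zero_norm' hbd hto
  have hfinal := T1.add T2
  rw [add_zero] at hfinal
  apply hfinal.congr'
  filter_upwards [hmem] with ε hε
  rw [main_eq E₂ hτ hε.1 hε.2.le, mul_add, ← mul_assoc, inv_mul_cancel₀ h2πI, one_mul]
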